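/- arXiv:1705.04222 — 4 statements merged into one kernel-verified Lean document; each statement's English description precedes it below -/
import Mathlib

section
/- For every stage i ∈ {1,…,N} and every t ∈ ℤ with t ≥ t_low^i, it holds that 0 ≤ J^i(t) − J̃^i(t) ≤ ε. In particular, the truncated backward recursion J̃, which is only computed on the intervals [t_low^i, t_up^i], underestimates the true value function J by at most the error tolerance ε on all reachable states. -/
/-- For every stage `i ∈ {1,…,N}` and every `t ≥ tlow i`,
`0 ≤ J i t − Jt i t ≤ ε`: the truncated backward recursion underestimates the
true value function by at most the error tolerance `ε` on all reachable states. -/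
theorem truncated_value_function_error_bound
    (N : ℕ) (hN : 2 ≤ N)
    (V : Type) [Fintype V] [Nonempty V]
    (Tmin Tmax : ℕ → ℤ)
    (hT : ∀ i, 1 ≤ i → i ≤ N - 1 → Tmin i ≤ Tmax i)
    (p : ℕ → ℤ → V → ℝ)
    (hp0 : ∀ i, 1 ≤ i → i ≤ N - 1 → ∀ (τ : ℤ) (v : V), 0 ≤ p i τ v)
    (hpsupp : ∀ i, 1 ≤ i → i ≤ N - 1 → ∀ (τ : ℤ) (v : V),
      (τ < Tmin i ∨ τ > Tmax i) → p i τ v = 0)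
    (hpsum : ∀ i, 1 ≤ i → i ≤ N - 1 → ∀ v : V,
      ∑ τ ∈ Finset.Icc (Tmin i) (Tmax i), p i τ v = 1)
    (J : ℕ → ℤ → ℝ)
    (hJN : ∀ t : ℤ, 0 ≤ J N t ∧ J N t ≤ 1)
    (hJrec : ∀ i, 1 ≤ i → i ≤ N - 1 → ∀ t : ℤ,
      J i t = (Finset.univ : Finset V).sup' Finset.univ_nonempty
        (fun v => ∑ τ ∈ Finset.Icc (Tmin i) (Tmax i), p i τ v * J (i + 1) (t + τ)))
    (tS : ℤ) (ε : ℝ) (hε : 0 ≤ ε)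
    (tlow tup : ℕ → ℤ)
    (htlow1 : tlow 1 = tS)
    (htlowrec : ∀ i, 1 ≤ i → i ≤ N - 1 → tlow (i + 1) = tlow i + Tmin i)
    (htupN : ∀ t : ℤ, tup N < t → J N t ≤ ε)
    (htuprec : ∀ i, 1 ≤ i → i ≤ N - 1 → tup i = tup (i + 1) - Tmin i)
    (Jt : ℕ → ℤ → ℝ)
    (hJtN : ∀ t : ℤ, Jt N t = if tlow N ≤ t ∧ t ≤ tup N then J N t else 0)
    (hJtrec : ∀ i, 1 ≤ i → i ≤ N - 1 → ∀ t : ℤ,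
      Jt i t = if tlow i ≤ t ∧ t ≤ tup i then
        (Finset.univ : Finset V).sup' Finset.univ_nonempty
          (fun v => ∑ τ ∈ Finset.Icc (tlow (i + 1)) (tup (i + 1)),
            p i (τ - t) v * Jt (i + 1) τ)
      else 0) :
    ∀ i, 1 ≤ i → i ≤ N → ∀ t : ℤ, tlow i ≤ t →
      0 ≤ J i t - Jt i t ∧ J i t - Jt i t ≤ ε := by
  have hvan : ∀ j, 1 ≤ j → j ≤ N → ∀ s : ℤ, tup j < s → Jt j s = 0 := by
    intro j h1 hjN s hs
    rcases eq_or_lt_of_le hjN with h | h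
    · subst h
      rw [hJtN]
      exact if_neg (by rintro ⟨_, h2⟩; omega)
    · rw [hJtrec j h1 (by omega) s]
      exact if_neg (by rintro ⟨_, h2⟩; omega)
  suffices H : ∀ d, ∀ i, 1 ≤ i → i ≤ N → N - i = d → ∀ t : ℤ, tlow i ≤ t →
      0 ≤ J i t - Jt i t ∧ J i t - Jt i t ≤ ε by
    intro i h1 h2 t ht; exact H (N - i) i h1 h2 rfl t ht
  intro d
  induction d with
  | zero =>
    intro i h1 h2 hd t ht
    have hiN : i = N := by omega
    subst hiN
    rw [hJtN t]
    by_cases hc : tlow i ≤ t ∧ t ≤ tup i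
    · rw [if_pos hc]; constructor <;> simp [hε]
    · rw [if_neg hc]
      have htup : tup i < t := by
        by_contra hcon
        exact hc ⟨ht, by omega⟩
      refine ⟨by simpa using (hJN t).1, by simpa using htupN t htup⟩
  | succ d ih =>
    intro i h1 h2 hd t ht
    have hiN : i ≤ N - 1 := by omega
    have hi1N : i + 1 ≤ N := by omega
    have hlow : tlow (i+1) = tlow i + Tmin i := htlowrec i h1 hiN
    have hup : tup i = tup (i+1) - Tmin i := htuprec i h1 hiN
    have ihh : ∀ s : ℤ, tlow (i+1) ≤ s →
        0 ≤ J (i+1) s - Jt (i+1) s ∧ J (i+1) s - Jt (i+1) s ≤ ε :=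
      fun s hs => ih (i+1) (by omega) hi1N (by omega) s hs
    rw [hJrec i h1 hiN t, hJtrec i h1 hiN t]
    set A := Finset.Icc (t + Tmin i) (t + Tmax i) ∪ Finset.Icc (tlow (i+1)) (tup (i+1)) with hA
    have hS : ∀ v : V, ∑ τ ∈ Finset.Icc (Tmin i) (Tmax i), p i τ v * J (i + 1) (t + τ)
        = ∑ σ ∈ A, p i (σ - t) v * J (i+1) σ := by
      intro v
      have h1' : ∑ σ ∈ Finset.Icc (t + Tmin i) (t + Tmax i), p i (σ - t) v * J (i+1) σ
          = ∑ τ ∈ Finset.Icc (Tmin i) (Tmax i), p i τ v * J (i + 1) (t + τ) := by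
        rw [← Finset.map_add_left_Icc, Finset.sum_map]
        simp [addLeftEmbedding]
      rw [← h1']
      apply Finset.sum_subset Finset.subset_union_left
      intro σ _ hσ
      have hp : p i (σ - t) v = 0 := by
        apply hpsupp i h1 hiN
        simp only [Finset.mem_Icc, not_and, not_le] at hσ
        omega
      rw [hp, zero_mul]
    have hSt : ∀ v : V, ∑ τ ∈ Finset.Icc (tlow (i+1)) (tup (i+1)), p i (τ - t) v * Jt (i+1) τ
        = ∑ σ ∈ A, p i (σ - t) v * Jt (i+1) σ := by
      intro v
      apply Finset.sum_subset Finset.subset_union_right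
      intro σ hσA hσ
      by_cases hpz : σ ∈ Finset.Icc (t + Tmin i) (t + Tmax i)
      · have hmem := Finset.mem_Icc.1 hpz
        simp only [Finset.mem_Icc, not_and, not_le] at hσ
        have hσlow : tlow (i+1) ≤ σ := by omega
        have hσup : tup (i+1) < σ := hσ hσlow
        rw [hvan (i+1) (by omega) hi1N σ hσup, mul_zero]
      · have hp : p i (σ - t) v = 0 := by
          apply hpsupp i h1 hiN
          simp only [Finset.mem_Icc, not_and, not_le] at hpz
          omega
        rw [hp, zero_mul]
    have hAlow : ∀ σ ∈ A, tlow (i+1) ≤ σ := by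
      intro σ hσ
      rcases Finset.mem_union.1 hσ with h | h <;>
        simp only [Finset.mem_Icc] at h <;> omega
    have hsum1 : ∀ v : V, ∑ σ ∈ A, p i (σ - t) v = 1 := by
      intro v
      have he : ∑ σ ∈ A, p i (σ - t) v
          = ∑ σ ∈ Finset.Icc (t + Tmin i) (t + Tmax i), p i (σ - t) v := by
        symm
        apply Finset.sum_subset Finset.subset_union_left
        intro σ _ hσ
        apply hpsupp i h1 hiN
        simp only [Finset.mem_Icc, not_and, not_le] at hσ
        omega
      rw [he, ← Finset.map_add_left_Icc, Finset.sum_map]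
      simp only [addLeftEmbedding_apply, add_sub_cancel_left]
      exact hpsum i h1 hiN v
    simp only [hS, hSt]
    by_cases hc : t ≤ tup i
    · rw [if_pos ⟨ht, hc⟩]
      have hdiff : ∀ v : V, (∑ σ ∈ A, p i (σ - t) v * J (i+1) σ)
          - (∑ σ ∈ A, p i (σ - t) v * Jt (i+1) σ)
          = ∑ σ ∈ A, p i (σ - t) v * (J (i+1) σ - Jt (i+1) σ) := by
        intro v
        rw [← Finset.sum_sub_distrib]
        exact Finset.sum_congr rfl fun σ _ => by ring
      have hnn : ∀ v : V, 0 ≤ (∑ σ ∈ A, p i (σ - t) v * J (i+1) σ)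
          - (∑ σ ∈ A, p i (σ - t) v * Jt (i+1) σ) := by
        intro v
        rw [hdiff v]
        apply Finset.sum_nonneg
        intro σ hσ
        exact mul_nonneg (hp0 i h1 hiN _ v) (ihh σ (hAlow σ hσ)).1
      have hle : ∀ v : V, (∑ σ ∈ A, p i (σ - t) v * J (i+1) σ)
          - (∑ σ ∈ A, p i (σ - t) v * Jt (i+1) σ) ≤ ε := by
        intro v
        rw [hdiff v]
        calc ∑ σ ∈ A, p i (σ - t) v * (J (i+1) σ - Jt (i+1) σ)
            ≤ ∑ σ ∈ A, p i (σ - t) v * ε := by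
              apply Finset.sum_le_sum
              intro σ hσ
              exact mul_le_mul_of_nonneg_left (ihh σ (hAlow σ hσ)).2 (hp0 i h1 hiN _ v)
          _ = (∑ σ ∈ A, p i (σ - t) v) * ε := by rw [Finset.sum_mul]
          _ = ε := by rw [hsum1 v, one_mul]
      constructor
      · rw [sub_nonneg]
        apply Finset.sup'_le
        intro v _
        calc (∑ σ ∈ A, p i (σ - t) v * Jt (i+1) σ)
            ≤ ∑ σ ∈ A, p i (σ - t) v * J (i+1) σ := by
              have := hnn v; linarith
          _ ≤ _ := Finset.le_sup' (fun v => ∑ σ ∈ A, p i (σ - t) v * J (i+1) σ) (Finset.mem_univ v)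
      · rw [sub_le_iff_le_add]
        apply Finset.sup'_le
        intro v _
        calc (∑ σ ∈ A, p i (σ - t) v * J (i+1) σ)
            ≤ (∑ σ ∈ A, p i (σ - t) v * Jt (i+1) σ) + ε := by
              have := hle v; linarith
          _ ≤ ε + Finset.sup' Finset.univ Finset.univ_nonempty
                (fun v => ∑ σ ∈ A, p i (σ - t) v * Jt (i+1) σ) := by
              have : (∑ σ ∈ A, p i (σ - t) v * Jt (i+1) σ)
                  ≤ Finset.sup' Finset.univ Finset.univ_nonempty
                    (fun v => ∑ σ ∈ A, p i (σ - t) v * Jt (i+1) σ) :=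
                Finset.le_sup' (fun v => ∑ σ ∈ A, p i (σ - t) v * Jt (i+1) σ) (Finset.mem_univ v)
              linarith
    · rw [if_neg (by rintro ⟨_, h⟩; exact hc h), sub_zero]
      have hterm : ∀ (v : V), ∀ σ ∈ A,
          0 ≤ p i (σ - t) v * J (i+1) σ ∧ p i (σ - t) v * J (i+1) σ ≤ p i (σ - t) v * ε := by
        intro v σ hσ
        by_cases hpz : p i (σ - t) v = 0
        · rw [hpz, zero_mul, zero_mul]; exact ⟨le_refl _, le_refl _⟩
        · have hin : Tmin i ≤ σ - t ∧ σ - t ≤ Tmax i := by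
            by_contra hcon
            exact hpz (hpsupp i h1 hiN _ v (by omega))
          have hσup : tup (i+1) < σ := by omega
          have hσlow : tlow (i+1) ≤ σ := by omega
          have hz : Jt (i+1) σ = 0 := hvan (i+1) (by omega) hi1N σ hσup
          have hJb := ihh σ hσlow
          rw [hz, sub_zero] at hJb
          exact ⟨mul_nonneg (hp0 i h1 hiN _ v) hJb.1,
            mul_le_mul_of_nonneg_left hJb.2 (hp0 i h1 hiN _ v)⟩
      constructor
      · obtain ⟨v0⟩ := (inferInstance : Nonempty V)
        calc (0:ℝ) ≤ ∑ σ ∈ A, p i (σ - t) v0 * J (i+1) σ :=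
              Finset.sum_nonneg fun σ hσ => (hterm v0 σ hσ).1
          _ ≤ _ := Finset.le_sup' (fun v => ∑ σ ∈ A, p i (σ - t) v * J (i+1) σ) (Finset.mem_univ v0)
      · apply Finset.sup'_le
        intro v _
        calc (∑ σ ∈ A, p i (σ - t) v * J (i+1) σ)
            ≤ ∑ σ ∈ A, p i (σ - t) v * ε :=
              Finset.sum_le_sum fun σ hσ => (hterm v σ hσ).2
          _ = (∑ σ ∈ A, p i (σ - t) v) * ε := by rw [Finset.sum_mul]
          _ = ε := by rw [hsum1 v, one_mul]
end

section
/- For every stage i ∈ {1,…,N} and every t ∈ ℤ, the truncated value function satisfies 0 ≤ J̃^i(t) ≤ J^i(t); i.e., truncating the backward recursion to the intervals [t_low^i, t_up^i] never overestimates the true value function and preserves nonnegativity. -/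
/-- For every stage `i ∈ {1,…,N}` and every `t ∈ ℤ`, the truncated
value function satisfies `0 ≤ Jt i t ≤ J i t`: truncating the backward recursion
to the intervals `[tlow i, tup i]` never overestimates the true value function
and preserves nonnegativity. -/
theorem truncated_value_function_underestimates
    (N : ℕ) (hN : 2 ≤ N)
    (V : Type) [Fintype V] [Nonempty V]
    (Tmin Tmax : ℕ → ℤ)
    (hT : ∀ i, 1 ≤ i → i ≤ N - 1 → Tmin i ≤ Tmax i)
    (p : ℕ → ℤ → V → ℝ)
    (hp0 : ∀ i, 1 ≤ i → i ≤ N - 1 → ∀ (τ : ℤ) (v : V), 0 ≤ p i τ v)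
    (hpsupp : ∀ i, 1 ≤ i → i ≤ N - 1 → ∀ (τ : ℤ) (v : V),
      (τ < Tmin i ∨ τ > Tmax i) → p i τ v = 0)
    (hpsum : ∀ i, 1 ≤ i → i ≤ N - 1 → ∀ v : V,
      ∑ τ ∈ Finset.Icc (Tmin i) (Tmax i), p i τ v = 1)
    (J : ℕ → ℤ → ℝ)
    (hJN : ∀ t : ℤ, 0 ≤ J N t ∧ J N t ≤ 1)
    (hJrec : ∀ i, 1 ≤ i → i ≤ N - 1 → ∀ t : ℤ,
      J i t = (Finset.univ : Finset V).sup' Finset.univ_nonempty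
        (fun v => ∑ τ ∈ Finset.Icc (Tmin i) (Tmax i), p i τ v * J (i + 1) (t + τ)))
    (tS : ℤ) (ε : ℝ) (hε : 0 ≤ ε)
    (tlow tup : ℕ → ℤ)
    (htlow1 : tlow 1 = tS)
    (htlowrec : ∀ i, 1 ≤ i → i ≤ N - 1 → tlow (i + 1) = tlow i + Tmin i)
    (htupN : ∀ t : ℤ, tup N < t → J N t ≤ ε)
    (htuprec : ∀ i, 1 ≤ i → i ≤ N - 1 → tup i = tup (i + 1) - Tmin i)
    (Jt : ℕ → ℤ → ℝ)
    (hJtN : ∀ t : ℤ, Jt N t = if tlow N ≤ t ∧ t ≤ tup N then J N t else 0)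
    (hJtrec : ∀ i, 1 ≤ i → i ≤ N - 1 → ∀ t : ℤ,
      Jt i t = if tlow i ≤ t ∧ t ≤ tup i then
        (Finset.univ : Finset V).sup' Finset.univ_nonempty
          (fun v => ∑ τ ∈ Finset.Icc (tlow (i + 1)) (tup (i + 1)),
            p i (τ - t) v * Jt (i + 1) τ)
      else 0) :
    ∀ i, 1 ≤ i → i ≤ N → ∀ t : ℤ, 0 ≤ Jt i t ∧ Jt i t ≤ J i t := by
  have key : ∀ d, ∀ i, 1 ≤ i → i ≤ N → N - i = d → ∀ t : ℤ, 0 ≤ Jt i t ∧ Jt i t ≤ J i t := by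
    intro d
    induction d with
    | zero =>
      intro i hi1 hiN hd t
      have hiN' : i = N := by omega
      subst hiN'
      rw [hJtN t]
      split_ifs with h
      · exact ⟨(hJN t).1, le_refl _⟩
      · exact ⟨le_refl _, (hJN t).1⟩
    | succ d IH =>
      intro i hi1 hiN hd t
      have hiN1 : i ≤ N - 1 := by omega
      have IH' : ∀ t : ℤ, 0 ≤ Jt (i + 1) t ∧ Jt (i + 1) t ≤ J (i + 1) t :=
        IH (i + 1) (by omega) (by omega) (by omega)
      have hJnn : ∀ t : ℤ, 0 ≤ J (i + 1) t := fun t => le_trans (IH' t).1 (IH' t).2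
      rw [hJtrec i hi1 hiN1 t]
      split_ifs with h
      · constructor
        · obtain ⟨v⟩ := ‹Nonempty V›
          refine le_trans ?_ (Finset.le_sup' _ (Finset.mem_univ v))
          exact Finset.sum_nonneg fun τ _ =>
            mul_nonneg (hp0 i hi1 hiN1 _ v) (IH' τ).1
        · rw [hJrec i hi1 hiN1 t]
          apply Finset.sup'_le
          intro v _
          refine le_trans ?_ (Finset.le_sup' _ (Finset.mem_univ v))
          have hRHS : ∑ τ ∈ Finset.Icc (Tmin i) (Tmax i), p i τ v * J (i + 1) (t + τ)
              = ∑ σ ∈ Finset.Icc (t + Tmin i) (t + Tmax i), p i (σ - t) v * J (i + 1) σ := by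
            rw [← Finset.map_add_left_Icc, Finset.sum_map]
            simp [addLeftEmbedding]
          rw [hRHS]
          set A := Finset.Icc (tlow (i + 1)) (tup (i + 1)) with hA
          set B := Finset.Icc (t + Tmin i) (t + Tmax i) with hB
          have h1 : ∑ σ ∈ A, p i (σ - t) v * Jt (i + 1) σ
              = ∑ σ ∈ A ∩ B, p i (σ - t) v * Jt (i + 1) σ := by
            refine (Finset.sum_subset Finset.inter_subset_left ?_).symm
            intro σ hσA hσnB
            have : σ - t < Tmin i ∨ σ - t > Tmax i := by
              simp only [hA, hB, Finset.mem_inter, Finset.mem_Icc, not_and, not_le] at hσA hσnB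
              omega
            rw [hpsupp i hi1 hiN1 _ v this, zero_mul]
          rw [h1]
          calc ∑ σ ∈ A ∩ B, p i (σ - t) v * Jt (i + 1) σ
              ≤ ∑ σ ∈ A ∩ B, p i (σ - t) v * J (i + 1) σ := by
                refine Finset.sum_le_sum fun σ _ => ?_
                exact mul_le_mul_of_nonneg_left (IH' σ).2 (hp0 i hi1 hiN1 _ v)
            _ ≤ ∑ σ ∈ B, p i (σ - t) v * J (i + 1) σ := by
                refine Finset.sum_le_sum_of_subset_of_nonneg Finset.inter_subset_right ?_
                intro σ _ _
                exact mul_nonneg (hp0 i hi1 hiN1 _ v) (hJnn σ)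
      · refine ⟨le_refl _, ?_⟩
        rw [hJrec i hi1 hiN1 t]
        obtain ⟨v⟩ := ‹Nonempty V›
        refine le_trans ?_ (Finset.le_sup' _ (Finset.mem_univ v))
        exact Finset.sum_nonneg fun τ _ =>
          mul_nonneg (hp0 i hi1 hiN1 _ v) (hJnn _)
  intro i hi1 hiN t
  exact key (N - i) i hi1 hiN rfl t
end

section
/- Inductive step of the error bound: let i ∈ {2,…,N} and suppose that (a) J^i(t) − J̃^i(t) ≤ ε for all t ∈ ℤ with t ≥ t_low^i, and (b) J^i(t) ≤ ε for all t > t_up^i. Then J^{i−1}(t) − J̃^{i−1}(t) ≤ ε for all t ∈ ℤ with t ≥ t_low^{i−1}. -/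

private lemma shift_sum' (f : ℤ → ℝ) (a b t : ℤ) :
    ∑ τ ∈ Finset.Icc a b, f (t + τ) = ∑ σ ∈ Finset.Icc (t + a) (t + b), f σ := by
  rw [← Finset.map_add_left_Icc, Finset.sum_map]
  simp [addLeftEmbedding]

/-- Inductive step of the error bound: let `i ∈ {2,…,N}` and
suppose (a) `J i t − Jt i t ≤ ε` for all `t ≥ tlow i`, and (b) `J i t ≤ ε` for
all `t > tup i`. Then `J (i−1) t − Jt (i−1) t ≤ ε` for all `t ≥ tlow (i−1)`. -/
theorem error_bound_inductive_step
    (N : ℕ) (hN : 2 ≤ N)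
    (V : Type) [Fintype V] [Nonempty V]
    (Tmin Tmax : ℕ → ℤ)
    (hT : ∀ i, 1 ≤ i → i ≤ N - 1 → Tmin i ≤ Tmax i)
    (p : ℕ → ℤ → V → ℝ)
    (hp0 : ∀ i, 1 ≤ i → i ≤ N - 1 → ∀ (τ : ℤ) (v : V), 0 ≤ p i τ v)
    (hpsupp : ∀ i, 1 ≤ i → i ≤ N - 1 → ∀ (τ : ℤ) (v : V),
      (τ < Tmin i ∨ τ > Tmax i) → p i τ v = 0)
    (hpsum : ∀ i, 1 ≤ i → i ≤ N - 1 → ∀ v : V,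
      ∑ τ ∈ Finset.Icc (Tmin i) (Tmax i), p i τ v = 1)
    (J : ℕ → ℤ → ℝ)
    (hJN : ∀ t : ℤ, 0 ≤ J N t ∧ J N t ≤ 1)
    (hJrec : ∀ i, 1 ≤ i → i ≤ N - 1 → ∀ t : ℤ,
      J i t = (Finset.univ : Finset V).sup' Finset.univ_nonempty
        (fun v => ∑ τ ∈ Finset.Icc (Tmin i) (Tmax i), p i τ v * J (i + 1) (t + τ)))
    (tS : ℤ) (ε : ℝ) (hε : 0 ≤ ε)
    (tlow tup : ℕ → ℤ)
    (htlow1 : tlow 1 = tS)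
    (htlowrec : ∀ i, 1 ≤ i → i ≤ N - 1 → tlow (i + 1) = tlow i + Tmin i)
    (htupN : ∀ t : ℤ, tup N < t → J N t ≤ ε)
    (htuprec : ∀ i, 1 ≤ i → i ≤ N - 1 → tup i = tup (i + 1) - Tmin i)
    (Jt : ℕ → ℤ → ℝ)
    (hJtN : ∀ t : ℤ, Jt N t = if tlow N ≤ t ∧ t ≤ tup N then J N t else 0)
    (hJtrec : ∀ i, 1 ≤ i → i ≤ N - 1 → ∀ t : ℤ,
      Jt i t = if tlow i ≤ t ∧ t ≤ tup i then
        (Finset.univ : Finset V).sup' Finset.univ_nonempty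
          (fun v => ∑ τ ∈ Finset.Icc (tlow (i + 1)) (tup (i + 1)),
            p i (τ - t) v * Jt (i + 1) τ)
      else 0)
    (i : ℕ) (hi2 : 2 ≤ i) (hiN : i ≤ N)
    (ha : ∀ t : ℤ, tlow i ≤ t → J i t - Jt i t ≤ ε)
    (hb : ∀ t : ℤ, tup i < t → J i t ≤ ε) :
    ∀ t : ℤ, tlow (i - 1) ≤ t → J (i - 1) t - Jt (i - 1) t ≤ ε := by
  intro t ht
  have hj1 : 1 ≤ i - 1 := by omega
  have hjN : i - 1 ≤ N - 1 := by omega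
  have hji : i - 1 + 1 = i := by omega
  set j := i - 1 with hjdef
  -- truncated value function vanishes outside the window
  have hJtzero : ∀ s : ℤ, (s < tlow i ∨ tup i < s) → Jt i s = 0 := by
    intro s hs
    rcases eq_or_lt_of_le hiN with h | h
    · rw [h, hJtN, if_neg]; rw [← h]; omega
    · rw [hJtrec i (by omega) (by omega) s, if_neg]; omega
  have hrecJ := hJrec j hj1 hjN t
  rw [hji] at hrecJ
  have htupj : tup j = tup i - Tmin j := by
    have := htuprec j hj1 hjN; rwa [hji] at this
  have htlowj : tlow i = tlow j + Tmin j := by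
    have := htlowrec j hj1 hjN; rwa [hji] at this
  by_cases hcase : t ≤ tup j
  · -- t is inside the window
    have hrecJt := hJtrec j hj1 hjN t
    rw [hji, if_pos ⟨ht, hcase⟩] at hrecJt
    rw [hrecJ, hrecJt, sub_le_iff_le_add]
    apply Finset.sup'_le
    intro v _
    set U : ℤ := max (t + Tmax j) (tup i) with hU
    set S : Finset ℤ := Finset.Icc (tlow i) U with hS
    have hsubA : Finset.Icc (t + Tmin j) (t + Tmax j) ⊆ S := by
      apply Finset.Icc_subset_Icc <;> omega
    have hsubB : Finset.Icc (tlow i) (tup i) ⊆ S := by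
      apply Finset.Icc_subset_Icc <;> omega
    -- rewrite A as a sum over S
    have hA : (∑ τ ∈ Finset.Icc (Tmin j) (Tmax j), p j τ v * J i (t + τ))
        = ∑ τ ∈ S, p j (τ - t) v * J i τ := by
      have h1 : (∑ τ ∈ Finset.Icc (Tmin j) (Tmax j), p j τ v * J i (t + τ))
          = ∑ σ ∈ Finset.Icc (t + Tmin j) (t + Tmax j), p j (σ - t) v * J i σ := by
        rw [← shift_sum' (fun σ => p j (σ - t) v * J i σ)]
        simp
      rw [h1]
      apply Finset.sum_subset hsubA
      intro x hx hx'
      rw [hpsupp j hj1 hjN (x - t) v (by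
        simp only [Finset.mem_Icc, not_and_or, not_le] at hx'
        omega), zero_mul]
    -- rewrite B as a sum over S
    have hB : (∑ τ ∈ Finset.Icc (tlow i) (tup i), p j (τ - t) v * Jt i τ)
        = ∑ τ ∈ S, p j (τ - t) v * Jt i τ := by
      apply Finset.sum_subset hsubB
      intro x hx hx'
      simp only [Finset.mem_Icc, not_and_or, not_le] at hx'
      rw [hJtzero x (by omega), mul_zero]
    -- the shifted probabilities sum to one over S
    have hsum1 : (∑ τ ∈ S, p j (τ - t) v) = 1 := by
      have h2 : (∑ τ ∈ S, p j (τ - t) v)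
          = ∑ σ ∈ Finset.Icc (t + Tmin j) (t + Tmax j), p j (σ - t) v := by
        symm
        apply Finset.sum_subset hsubA
        intro x hx hx'
        apply hpsupp j hj1 hjN (x - t) v
        simp only [Finset.mem_Icc, not_and_or, not_le] at hx'
        omega
      rw [h2, ← shift_sum' (fun σ => p j (σ - t) v)]
      simp only [add_sub_cancel_left]
      exact hpsum j hj1 hjN v
    have hBle : (∑ τ ∈ S, p j (τ - t) v * Jt i τ)
        ≤ (Finset.univ : Finset V).sup' Finset.univ_nonempty
          (fun v => ∑ τ ∈ Finset.Icc (tlow i) (tup i), p j (τ - t) v * Jt i τ) := by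
      rw [← hB]
      exact Finset.le_sup' (fun w => ∑ τ ∈ Finset.Icc (tlow i) (tup i),
        p j (τ - t) w * Jt i τ) (Finset.mem_univ v)
    rw [hA]
    calc (∑ τ ∈ S, p j (τ - t) v * J i τ)
        ≤ ∑ τ ∈ S, (p j (τ - t) v * Jt i τ + p j (τ - t) v * ε) := by
          apply Finset.sum_le_sum
          intro x hx
          have hxlow : tlow i ≤ x := (Finset.mem_Icc.mp hx).1
          have hP := hp0 j hj1 hjN (x - t) v
          have := ha x hxlow
          nlinarith
      _ = (∑ τ ∈ S, p j (τ - t) v * Jt i τ) + (∑ τ ∈ S, p j (τ - t) v) * ε := by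
          rw [Finset.sum_add_distrib, Finset.sum_mul]
      _ ≤ _ := by
          rw [hsum1, one_mul, add_comm]
          exact add_le_add_right hBle ε
  · -- t is past the window: truncated value is zero and true value is small
    have hrecJt := hJtrec j hj1 hjN t
    rw [hji, if_neg (by omega)] at hrecJt
    rw [hrecJt, sub_zero, hrecJ]
    apply Finset.sup'_le
    intro v _
    calc (∑ τ ∈ Finset.Icc (Tmin j) (Tmax j), p j τ v * J i (t + τ))
        ≤ ∑ τ ∈ Finset.Icc (Tmin j) (Tmax j), p j τ v * ε := by
          apply Finset.sum_le_sum
          intro x hx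
          have hx1 := (Finset.mem_Icc.mp hx).1
          have hP := hp0 j hj1 hjN x v
          have := hb (t + x) (by omega)
          nlinarith
      _ = ε := by rw [← Finset.sum_mul, hpsum j hj1 hjN v, one_mul]
end

section
/- States arriving later than t_up^i can be discarded: for every stage i ∈ {1,…,N−1}, every t ∈ ℤ with t > t_up^i, and every choice of controls π_i,…,π_{N−1} with π_j : ℤ → 𝕍, the expected terminal value starting from state (i,t) satisfies Σ_{s∈ℤ} q^N(s) J^N(s) ≤ ε; i.e., once the vehicle reaches segment i later than t_up^i, its probability of a successful merge is at most ε under any control policy. -/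
/-- States arriving later than `tup i` can be discarded: for
every stage `i ∈ {1,…,N−1}`, every `t > tup i`, and every choice of controls
`π i, …, π (N−1)`, the expected terminal value starting from state `(i, t)`
satisfies `Σ_s q N s * JN s ≤ ε`: once the vehicle reaches segment `i` later
than `tup i`, its probability of a successful merge is at most `ε` under any
control policy. -/
theorem late_states_discardable
    (N : ℕ) (hN : 2 ≤ N)
    (V : Type) [Fintype V] [Nonempty V]
    (Tmin Tmax : ℕ → ℤ)
    (hT : ∀ i, 1 ≤ i → i ≤ N - 1 → Tmin i ≤ Tmax i)
    (p : ℕ → ℤ → V → ℝ)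
    (hp0 : ∀ i, 1 ≤ i → i ≤ N - 1 → ∀ (τ : ℤ) (v : V), 0 ≤ p i τ v)
    (hpsupp : ∀ i, 1 ≤ i → i ≤ N - 1 → ∀ (τ : ℤ) (v : V),
      (τ < Tmin i ∨ τ > Tmax i) → p i τ v = 0)
    (hpsum : ∀ i, 1 ≤ i → i ≤ N - 1 → ∀ v : V,
      ∑ τ ∈ Finset.Icc (Tmin i) (Tmax i), p i τ v = 1)
    (JN : ℤ → ℝ)
    (hJN : ∀ t : ℤ, 0 ≤ JN t ∧ JN t ≤ 1)
    (ε : ℝ) (hε : 0 ≤ ε)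
    (tup : ℕ → ℤ)
    (htupN : ∀ t : ℤ, tup N < t → JN t ≤ ε)
    (htuprec : ∀ i, 1 ≤ i → i ≤ N - 1 → tup i = tup (i + 1) - Tmin i)
    (i : ℕ) (hi1 : 1 ≤ i) (hiN : i ≤ N - 1)
    (t : ℤ) (ht : tup i < t)
    (π : ℕ → ℤ → V)
    (q : ℕ → ℤ → ℝ)
    (hqi : ∀ s : ℤ, q i s = if s = t then 1 else 0)
    (hqrec : ∀ j, i ≤ j → j ≤ N - 1 → ∀ s : ℤ,
      q (j + 1) s = ∑ τ ∈ Finset.Icc (Tmin j) (Tmax j),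
        p j τ (π j (s - τ)) * q j (s - τ)) :
    ∑ᶠ s : ℤ, q N s * JN s ≤ ε := by
  have key : ∀ j, i ≤ j → j ≤ N →
      (Function.support (q j)).Finite ∧
      ∀ g : ℤ → ℝ, (∀ s, 0 ≤ g s) → (∀ s, g s ≤ 1) →
        (∀ s, tup j < s → g s ≤ ε) → ∑ᶠ s, q j s * g s ≤ ε := by
    intro j hj
    induction j, hj using Nat.le_induction with
    | base =>
      intro _
      constructor
      · apply Set.Finite.subset (Set.finite_singleton t)
        intro s hs
        simp only [Function.mem_support, hqi] at hs
        by_contra h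
        simp [Set.mem_singleton_iff] at h
        simp [h] at hs
      · intro g hg0 hg1 hgtail
        have hz : ∀ s : ℤ, s ≠ t → q i s * g s = 0 := by
          intro s hs; rw [hqi]; simp [hs]
        rw [finsum_eq_single _ t hz, hqi]
        simpa using hgtail t ht
    | succ j hij IH =>
      intro hjN
      have hj1 : 1 ≤ j := le_trans hi1 hij
      have hjN1 : j ≤ N - 1 := by omega
      obtain ⟨hfin, H⟩ := IH (by omega)
      set A : Finset ℤ := hfin.toFinset with hA
      set I : Finset ℤ := Finset.Icc (Tmin j) (Tmax j) with hI
      set B : Finset ℤ := Finset.image (fun x : ℤ × ℤ => x.1 + x.2) (A ×ˢ I) with hB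
      have hsupp : Function.support (q (j + 1)) ⊆ ↑B := by
        intro s hs
        simp only [Function.mem_support, hqrec j hij hjN1 s] at hs
        obtain ⟨τ, hτI, hτ⟩ := Finset.exists_ne_zero_of_sum_ne_zero hs
        have hq : q j (s - τ) ≠ 0 := fun h => hτ (by rw [h, mul_zero])
        have : s - τ ∈ A := by simp [hA, Set.Finite.mem_toFinset, Function.mem_support, hq]
        simp only [hB, Finset.mem_coe, Finset.mem_image]
        exact ⟨(s - τ, τ), Finset.mk_mem_product this hτI, by ring⟩
      refine ⟨Set.Finite.subset B.finite_toSet hsupp, ?_⟩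
      intro g hg0 hg1 hgtail
      set g' : ℤ → ℝ := fun s' => ∑ τ ∈ I, p j τ (π j s') * g (s' + τ) with hg'
      have step1 : ∑ᶠ s, q (j + 1) s * g s = ∑ s ∈ B, q (j + 1) s * g s := by
        apply finsum_eq_finset_sum_of_support_subset
        intro s hs
        apply hsupp
        simp only [Function.mem_support] at hs ⊢
        exact fun h => hs (by rw [h, zero_mul])
      have step2 : ∑ s ∈ B, q (j + 1) s * g s
          = ∑ τ ∈ I, ∑ s ∈ B, p j τ (π j (s - τ)) * q j (s - τ) * g s := by
        rw [Finset.sum_comm]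
        apply Finset.sum_congr rfl
        intro s _
        rw [hqrec j hij hjN1 s, Finset.sum_mul]
      have step3 : ∀ τ ∈ I, ∑ s ∈ B, p j τ (π j (s - τ)) * q j (s - τ) * g s
          = ∑ s' ∈ A, p j τ (π j s') * q j s' * g (s' + τ) := by
        intro τ hτ
        have hmap : A.map (addRightEmbedding τ) ⊆ B := by
          intro s hs
          simp only [Finset.mem_map, addRightEmbedding_apply] at hs
          obtain ⟨s', hs', rfl⟩ := hs
          simp only [hB, Finset.mem_image]
          exact ⟨(s', τ), Finset.mk_mem_product hs' hτ, rfl⟩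
        rw [← Finset.sum_subset hmap, Finset.sum_map]
        · apply Finset.sum_congr rfl
          intro s' _
          simp [addRightEmbedding_apply]
        · intro s hsB hsn
          have : q j (s - τ) = 0 := by
            by_contra hq
            apply hsn
            simp only [Finset.mem_map, addRightEmbedding_apply]
            refine ⟨s - τ, ?_, by ring⟩
            simp [hA, Set.Finite.mem_toFinset, Function.mem_support, hq]
          rw [this, mul_zero, zero_mul]
      have step4 : ∑ τ ∈ I, ∑ s' ∈ A, p j τ (π j s') * q j s' * g (s' + τ)
          = ∑ s' ∈ A, q j s' * g' s' := by
        rw [Finset.sum_comm]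
        apply Finset.sum_congr rfl
        intro s' _
        rw [hg', Finset.mul_sum]
        apply Finset.sum_congr rfl
        intro τ _
        ring
      have step5 : ∑ s' ∈ A, q j s' * g' s' = ∑ᶠ s', q j s' * g' s' := by
        symm
        apply finsum_eq_finset_sum_of_support_subset
        intro s hs
        simp only [Function.mem_support] at hs
        have : q j s ≠ 0 := fun h => hs (by rw [h, zero_mul])
        simp [hA, Set.Finite.mem_toFinset, Function.mem_support, this]
      have hpj0 := hp0 j hj1 hjN1
      have hpjsum := hpsum j hj1 hjN1
      have hg'0 : ∀ s', 0 ≤ g' s' :=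
        fun s' => Finset.sum_nonneg fun τ _ => mul_nonneg (hpj0 τ _) (hg0 _)
      have hg'1 : ∀ s', g' s' ≤ 1 := by
        intro s'
        calc g' s' ≤ ∑ τ ∈ I, p j τ (π j s') * 1 :=
              Finset.sum_le_sum fun τ _ =>
                mul_le_mul_of_nonneg_left (hg1 _) (hpj0 τ _)
          _ = 1 := by simpa using hpjsum (π j s')
      have hg'tail : ∀ s', tup j < s' → g' s' ≤ ε := by
        intro s' hs'
        have htup : tup j + Tmin j = tup (j + 1) := by
          rw [htuprec j hj1 hjN1]; ring
        calc g' s' ≤ ∑ τ ∈ I, p j τ (π j s') * ε := by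
              apply Finset.sum_le_sum
              intro τ hτ
              have hτmin : Tmin j ≤ τ := (Finset.mem_Icc.mp hτ).1
              have : tup (j + 1) < s' + τ := by omega
              exact mul_le_mul_of_nonneg_left (hgtail _ this) (hpj0 τ _)
          _ = ε := by rw [← Finset.sum_mul, hpjsum (π j s'), one_mul]
      calc ∑ᶠ s, q (j + 1) s * g s = ∑ᶠ s', q j s' * g' s' := by
            rw [step1, step2, Finset.sum_congr rfl step3, step4, step5]
        _ ≤ ε := H g' hg'0 hg'1 hg'tail
  obtain ⟨-, H⟩ := key N (by omega) le_rfl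
  exact H JN (fun s => (hJN s).1) (fun s => (hJN s).2) (fun s hs => htupN s hs)
end
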